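/- For any two finite simple graphs G and H (with no isolated vertices) and vertices u, v ∈ V_G and x, y ∈ V_H: if 𝒫^{L̂_G}(u,v) = 𝒫^{L̂_H}(x,y) (equality of multisets), then SPD_G(u,v) = SPD_H(x,y). (The eigenspace projection invariant of the normalized Laplacian determines the shortest-path distance.) -/

import Mathlib

open scoped Classical
open Matrix BigOperators

noncomputable section

namespace EPWL

/-! ### Generic node-coloring refinement with pairwise features in a type `α` -/

/-- The common nested type of round-`l` colors: `C 0 = Unit`,
`C (l+1) = C l × Multiset (C l × α)`. -/
def Color (α : Type) : ℕ → Type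
  | 0 => Unit
  | l + 1 => Color α l × Multiset (Color α l × α)

/-- The color refinement: `χ⁰(u) = ()` and
`χ^{l+1}(u) = (χ^l(u), {{(χ^l(v), f u v) : v}})`. -/
def colorFn {V : Type*} [Fintype V] {α : Type} (f : V → V → α) :
    (l : ℕ) → V → Color α l
  | 0 => fun _ => ()
  | l + 1 => fun u =>
      (colorFn f l u, Finset.univ.val.map fun v => (colorFn f l v, f u v))

/-- Two graphs (presented through their pairwise-feature functions) are
indistinguishable by the node-coloring refinement: at every round, the
multisets of node colors agree. -/
def NodeIndist {V W : Type*} [Fintype V] [Fintype W] {α : Type}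
    (f : V → V → α) (g : W → W → α) : Prop :=
  ∀ l : ℕ, Finset.univ.val.map (colorFn f l) = Finset.univ.val.map (colorFn g l)

/-- Atomic type of an ordered vertex pair: `0` if equal, `1` if adjacent,
`2` otherwise. -/
def atp {V : Type*} (G : SimpleGraph V) (u v : V) : ℕ :=
  if u = v then 0 else if G.Adj u v then 1 else 2

/-- 1-WL indistinguishability. -/
def WL1Indist {V W : Type*} [Fintype V] [Fintype W]
    (G : SimpleGraph V) (H : SimpleGraph W) : Prop :=
  NodeIndist (atp G) (atp H)

/-! ### Graph matrices -/

/-- Real adjacency matrix. -/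
def adjM {V : Type*} [Fintype V] (G : SimpleGraph V) : Matrix V V ℝ :=
  G.adjMatrix ℝ

/-- Real (diagonal) degree matrix. -/
def degM {V : Type*} [Fintype V] (G : SimpleGraph V) : Matrix V V ℝ :=
  Matrix.diagonal fun v => (G.degree v : ℝ)

/-- Laplacian matrix `L = D - A`. -/
def lapM {V : Type*} [Fintype V] (G : SimpleGraph V) : Matrix V V ℝ :=
  degM G - adjM G

/-- The diagonal matrix `D^{-1/2}`. -/
def invSqrtDegM {V : Type*} [Fintype V] (G : SimpleGraph V) : Matrix V V ℝ :=
  Matrix.diagonal fun v => (Real.sqrt (G.degree v))⁻¹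

/-- Normalized Laplacian `L̂ = D^{-1/2} L D^{-1/2}`. -/
def normLapM {V : Type*} [Fintype V] (G : SimpleGraph V) : Matrix V V ℝ :=
  invSqrtDegM G * lapM G * invSqrtDegM G

/-- Normalized adjacency matrix `Â = D^{-1/2} A D^{-1/2}`. -/
def normAdjM {V : Type*} [Fintype V] (G : SimpleGraph V) : Matrix V V ℝ :=
  invSqrtDegM G * adjM G * invSqrtDegM G

/-- The diagonal matrix `D⁻¹` of inverse degrees. -/
def invDegM {V : Type*} [Fintype V] (G : SimpleGraph V) : Matrix V V ℝ :=
  Matrix.diagonal fun v => ((G.degree v : ℝ))⁻¹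

/-- The random-walk matrix `D⁻¹ A`. -/
def rwM {V : Type*} [Fintype V] (G : SimpleGraph V) : Matrix V V ℝ :=
  invDegM G * adjM G

/-- The all-ones matrix `J`. -/
def allOnes (V : Type*) : Matrix V V ℝ := Matrix.of fun _ _ => 1

/-- A choice among the three graph matrices `A`, `L`, `L̂`. -/
inductive MatChoice | adj | lap | normLap

/-- The graph matrix associated with a choice. -/
def matOf {V : Type*} [Fintype V] (c : MatChoice) (G : SimpleGraph V) :
    Matrix V V ℝ :=
  match c with
  | .adj => adjM G
  | .lap => lapM G
  | .normLap => normLapM G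

/-! ### Spectral decompositions and the eigenspace projection invariant -/

/-- `IsSpectralDecomp M Λ P` says: `Λ` is the (finite) set of distinct
eigenvalues of the symmetric matrix `M` and, for `lam ∈ Λ`, `P lam` is the
orthogonal projection onto the eigenspace of `lam`. This is characterized
uniquely by: the `P lam` are symmetric idempotent nonzero matrices,
pairwise "orthogonal" (`P lam * P mu = 0` for `lam ≠ mu`), summing to the
identity, with `∑ lam • P lam = M`. -/
structure IsSpectralDecomp {n : Type*} [Fintype n]
    (M : Matrix n n ℝ) (Λ : Finset ℝ) (P : ℝ → Matrix n n ℝ) : Prop where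
  symm : ∀ lam ∈ Λ, (P lam)ᵀ = P lam
  idem : ∀ lam ∈ Λ, P lam * P lam = P lam
  nonzero : ∀ lam ∈ Λ, P lam ≠ 0
  orth : ∀ lam ∈ Λ, ∀ mu ∈ Λ, lam ≠ mu → P lam * P mu = 0
  sum_one : ∑ lam ∈ Λ, P lam = 1
  sum_smul : ∑ lam ∈ Λ, lam • P lam = M

/-- The eigenspace projection invariant
`𝒫^M(u,v) = {{(lam, P_lam(u,v)) : lam eigenvalue of M}}`. -/
def projInv {n : Type*} (Λ : Finset ℝ) (P : ℝ → Matrix n n ℝ) (u v : n) :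
    Multiset (ℝ × ℝ) :=
  Λ.val.map fun lam => (lam, P lam u v)

/-! ### Subgraph Weisfeiler-Lehman variants (SWL, PSWL) and 3-WL -/

/-- Round-`l` color type for SWL. -/
def SColor : ℕ → Type
  | 0 => ℕ
  | l + 1 => SColor l × Multiset (SColor l × ℕ)

/-- Initial pair color: `1` on the diagonal, `0` off it. -/
def initPairColor {V : Type*} (u v : V) : ℕ := if u = v then 1 else 0

/-- The SWL pair-coloring. -/
def swl {V : Type*} [Fintype V] (G : SimpleGraph V) :
    (l : ℕ) → V → V → SColor l
  | 0 => fun u v => initPairColor u v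
  | l + 1 => fun u v =>
      (swl G l u v, Finset.univ.val.map fun w => (swl G l u w, atp G v w))

/-- SWL indistinguishability. -/
def SWLIndist {V W : Type*} [Fintype V] [Fintype W]
    (G : SimpleGraph V) (H : SimpleGraph W) : Prop :=
  ∀ l : ℕ,
    ((Finset.univ : Finset (V × V)).val.map fun p => swl G l p.1 p.2) =
      ((Finset.univ : Finset (W × W)).val.map fun p => swl H l p.1 p.2)

/-- Round-`l` color type for PSWL. -/
def PSColor : ℕ → Type
  | 0 => ℕ
  | l + 1 => PSColor l × PSColor l × Multiset (PSColor l × ℕ)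

/-- The PSWL pair-coloring. -/
def pswl {V : Type*} [Fintype V] (G : SimpleGraph V) :
    (l : ℕ) → V → V → PSColor l
  | 0 => fun u v => initPairColor u v
  | l + 1 => fun u v =>
      (pswl G l u v, pswl G l v v,
        Finset.univ.val.map fun w => (pswl G l u w, atp G v w))

/-- PSWL indistinguishability. -/
def PSWLIndist {V W : Type*} [Fintype V] [Fintype W]
    (G : SimpleGraph V) (H : SimpleGraph W) : Prop :=
  ∀ l : ℕ,
    ((Finset.univ : Finset (V × V)).val.map fun p => pswl G l p.1 p.2) =
      ((Finset.univ : Finset (W × W)).val.map fun p => pswl H l p.1 p.2)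

/-- Round-`l` color type for 3-WL; the initial color records which of
`u, v, w` coincide and which of the pairs are edges. -/
def W3Color : ℕ → Type
  | 0 => Bool × Bool × Bool × Bool × Bool × Bool
  | l + 1 => W3Color l × Multiset (W3Color l × W3Color l × W3Color l)

/-- The 3-WL triple-coloring. -/
def wl3 {V : Type*} [Fintype V] (G : SimpleGraph V) :
    (l : ℕ) → V → V → V → W3Color l
  | 0 => fun u v w =>
      (decide (u = v), decide (u = w), decide (v = w),
        decide (G.Adj u v), decide (G.Adj u w), decide (G.Adj v w))
  | l + 1 => fun u v w =>
      (wl3 G l u v w,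
        Finset.univ.val.map fun z =>
          (wl3 G l z v w, wl3 G l u z w, wl3 G l u v z))

/-- 3-WL indistinguishability. -/
def WL3Indist {V W : Type*} [Fintype V] [Fintype W]
    (G : SimpleGraph V) (H : SimpleGraph W) : Prop :=
  ∀ l : ℕ,
    ((Finset.univ : Finset (V × V × V)).val.map fun p => wl3 G l p.1 p.2.1 p.2.2) =
      ((Finset.univ : Finset (W × W × W)).val.map fun p => wl3 H l p.1 p.2.1 p.2.2)

/-! ### Distances -/

/-- The shortest-path distance, valued in `ℕ∞`. -/
def spd {V : Type*} (G : SimpleGraph V) (u v : V) : ℕ∞ := G.edist u v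

/-- The four Penrose conditions characterizing the Moore–Penrose
pseudoinverse `X` of `B`. -/
def IsMoorePenrose {n : Type*} [Fintype n] (B X : Matrix n n ℝ) : Prop :=
  B * X * B = B ∧ X * B * X = X ∧ (B * X)ᵀ = B * X ∧ (X * B)ᵀ = X * B

/-- Resistance distance computed from (a Moore–Penrose pseudoinverse of)
the Laplacian: `X(u,u) + X(v,v) - 2X(u,v)` for vertices in the same
connected component, and `∞` otherwise. -/
def rdOf {V : Type*} (G : SimpleGraph V) (X : Matrix V V ℝ) (u v : V) :
    WithTop ℝ :=
  if G.Reachable u v then ((X u u + X v v - 2 * X u v : ℝ) : WithTop ℝ) else ⊤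

/-- Matrix exponential, as the everywhere-convergent power series
`exp B = ∑ Bⁿ/n!`. -/
def matExp {V : Type*} [Fintype V] (B : Matrix V V ℝ) : Matrix V V ℝ :=
  ∑' n : ℕ, ((n.factorial : ℝ))⁻¹ • B ^ n

/-! ### Connectivity notions -/

/-- Number of connected components. -/
def numComponents {V : Type*} (G : SimpleGraph V) : ℕ :=
  Nat.card G.ConnectedComponent

/-- A cut vertex: deleting it (and all incident edges) strictly increases
the number of connected components. -/
def IsCutVertex {V : Type*} (G : SimpleGraph V) (v : V) : Prop :=
  numComponents G < numComponents (G.induce {w : V | w ≠ v})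

/-- A cut edge: it is an edge whose deletion strictly increases the number
of connected components. -/
def IsCutEdge {V : Type*} (G : SimpleGraph V) (e : Sym2 V) : Prop :=
  e ∈ G.edgeSet ∧ numComponents G < numComponents (G.deleteEdges {e})



/-! ### Auxiliary lemmas for Statement 11 -/

lemma adjM_nonneg {V : Type*} [Fintype V] (G : SimpleGraph V) (u v : V) :
    0 ≤ adjM G u v := by
  by_cases h : G.Adj u v <;> simp [adjM, h]

lemma normAdj_apply' {V : Type*} [Fintype V] (G : SimpleGraph V) (u v : V) :
    normAdjM G u v
      = (Real.sqrt (G.degree u))⁻¹ * adjM G u v * (Real.sqrt (G.degree v))⁻¹ := by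
  rw [normAdjM, invSqrtDegM, Matrix.mul_diagonal, Matrix.diagonal_mul]

lemma normAdj_nonneg {V : Type*} [Fintype V] (G : SimpleGraph V) (u v : V) :
    0 ≤ normAdjM G u v := by
  rw [normAdj_apply']
  exact mul_nonneg (mul_nonneg (by positivity) (adjM_nonneg G u v)) (by positivity)

lemma normAdj_eq_zero_iff {V : Type*} [Fintype V] (G : SimpleGraph V)
    (hG : ∀ v, 0 < G.degree v) (u v : V) :
    normAdjM G u v = 0 ↔ adjM G u v = 0 := by
  rw [normAdj_apply']
  have h1 : (Real.sqrt (G.degree u))⁻¹ ≠ 0 := by have := hG u; positivity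
  have h2 : (Real.sqrt (G.degree v))⁻¹ ≠ 0 := by have := hG v; positivity
  simp [h1, h2]

lemma adjM_pow_nonneg {V : Type*} [Fintype V] (G : SimpleGraph V) (k : ℕ) (u v : V) :
    0 ≤ (adjM G ^ k) u v := by
  rw [adjM, SimpleGraph.adjMatrix_pow_apply_eq_card_walk]
  positivity

lemma normAdj_pow_zero_iff {V : Type*} [Fintype V] (G : SimpleGraph V)
    (hG : ∀ v, 0 < G.degree v) (k : ℕ) : ∀ u v : V,
    0 ≤ (normAdjM G ^ k) u v ∧
      ((normAdjM G ^ k) u v = 0 ↔ (adjM G ^ k) u v = 0) := by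
  induction k with
  | zero => intro u v; by_cases h : u = v <;> simp [Matrix.one_apply, h]
  | succ k ih =>
    intro u v
    rw [pow_succ, pow_succ, Matrix.mul_apply, Matrix.mul_apply]
    constructor
    · exact Finset.sum_nonneg fun w _ => mul_nonneg (ih u w).1 (normAdj_nonneg G w v)
    · rw [Finset.sum_eq_zero_iff_of_nonneg
            (fun w _ => mul_nonneg (ih u w).1 (normAdj_nonneg G w v)),
          Finset.sum_eq_zero_iff_of_nonneg
            (fun w _ => mul_nonneg (adjM_pow_nonneg G k u w) (adjM_nonneg G w v))]
      refine forall_congr' fun w => imp_congr Iff.rfl ?_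
      rw [mul_eq_zero, mul_eq_zero, (ih u w).2, normAdj_eq_zero_iff G hG w v]

lemma edist_eq_sInf_pow {V : Type*} [Fintype V] (G : SimpleGraph V) (u v : V) :
    G.edist u v = sInf ((fun k : ℕ => (k : ℕ∞)) '' {k | (adjM G ^ k) u v ≠ 0}) := by
  have hset : ∀ k : ℕ, (adjM G ^ k) u v ≠ 0 ↔
      Nonempty {p : G.Walk u v // p.length = k} := by
    intro k
    rw [adjM, SimpleGraph.adjMatrix_pow_apply_eq_card_walk, Nat.cast_ne_zero,
      ← Nat.pos_iff_ne_zero]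
    exact Fintype.card_pos_iff
  apply le_antisymm
  · apply le_sInf
    rintro b ⟨k, hk, rfl⟩
    obtain ⟨p, hp⟩ := (hset k).mp hk
    exact hp ▸ p.edist_le
  · rw [SimpleGraph.edist]
    apply le_iInf
    intro w
    exact sInf_le ⟨w.length, (hset _).mpr ⟨⟨w, rfl⟩⟩, rfl⟩

lemma proj_mul_self {n : Type*} [Fintype n] {M : Matrix n n ℝ} {Λ : Finset ℝ}
    {P : ℝ → Matrix n n ℝ} (hP : IsSpectralDecomp M Λ P) {lam : ℝ} (hlam : lam ∈ Λ) :
    P lam * M = lam • P lam := by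
  calc P lam * M = P lam * ∑ mu ∈ Λ, mu • P mu := by rw [hP.sum_smul]
    _ = ∑ mu ∈ Λ, mu • (P lam * P mu) := by
        rw [Finset.mul_sum]; exact Finset.sum_congr rfl fun mu _ => Matrix.mul_smul ..
    _ = lam • P lam := by
        rw [Finset.sum_eq_single lam]
        · rw [hP.idem lam hlam]
        · intro mu hmu hne
          rw [hP.orth lam hlam mu hmu (Ne.symm hne), smul_zero]
        · intro hl; exact absurd hlam hl

lemma spectral_pow {n : Type*} [Fintype n] {M : Matrix n n ℝ} {Λ : Finset ℝ}
    {P : ℝ → Matrix n n ℝ} (hP : IsSpectralDecomp M Λ P) (k : ℕ) :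
    ((1 : Matrix n n ℝ) - M) ^ k = ∑ lam ∈ Λ, (1 - lam) ^ k • P lam := by
  induction k with
  | zero => simp [hP.sum_one]
  | succ k ih =>
    rw [pow_succ, ih, Finset.sum_mul]
    refine Finset.sum_congr rfl fun lam hlam => ?_
    rw [Matrix.smul_mul, mul_sub, mul_one, proj_mul_self hP hlam]
    have h1 : P lam - lam • P lam = (1 - lam) • P lam := by
      rw [sub_smul, one_smul]
    rw [h1, smul_smul, ← pow_succ]

lemma spectral_pow_apply {n : Type*} [Fintype n] {M : Matrix n n ℝ} {Λ : Finset ℝ}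
    {P : ℝ → Matrix n n ℝ} (hP : IsSpectralDecomp M Λ P) (k : ℕ) (u v : n) :
    (((1 : Matrix n n ℝ) - M) ^ k) u v
      = (Λ.val.map fun lam => (1 - lam) ^ k * P lam u v).sum := by
  rw [spectral_pow hP k]
  rw [show (∑ lam ∈ Λ, (1 - lam) ^ k • P lam) u v
      = ∑ lam ∈ Λ, (1 - lam) ^ k * P lam u v by
    simp [Matrix.sum_apply]]
  rfl

lemma one_sub_normLap {V : Type*} [Fintype V] (G : SimpleGraph V)
    (hG : ∀ v, 0 < G.degree v) :
    (1 : Matrix V V ℝ) - normLapM G = normAdjM G := by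
  have hD : invSqrtDegM G * degM G * invSqrtDegM G = 1 := by
    rw [invSqrtDegM, degM, Matrix.diagonal_mul_diagonal, Matrix.diagonal_mul_diagonal]
    ext i j
    by_cases hij : i = j
    · subst hij
      rw [Matrix.diagonal_apply_eq, Matrix.one_apply_eq]
      have hd : (0 : ℝ) < (G.degree i : ℝ) := by exact_mod_cast hG i
      have hs : Real.sqrt (G.degree i) ≠ 0 := by positivity
      have hm : Real.sqrt (G.degree i) * Real.sqrt (G.degree i) = (G.degree i : ℝ) :=
        Real.mul_self_sqrt hd.le
      field_simp
      rw [sq, hm]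
    · rw [Matrix.diagonal_apply_ne _ hij, Matrix.one_apply_ne hij]
  rw [normLapM, lapM, mul_sub, sub_mul, hD, normAdjM]
  abel

/-- The eigenspace projection invariant of the normalized
Laplacian at a vertex pair determines the shortest-path distance of that
pair. -/
theorem projInv_normLap_determines_spd {V W : Type*} [Fintype V] [Fintype W]
    (G : SimpleGraph V) (H : SimpleGraph W)
    (hG : ∀ v, 0 < G.degree v) (hH : ∀ w, 0 < H.degree w)
    (ΛG : Finset ℝ) (PG : ℝ → Matrix V V ℝ)
    (hPG : IsSpectralDecomp (normLapM G) ΛG PG)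
    (ΛH : Finset ℝ) (PH : ℝ → Matrix W W ℝ)
    (hPH : IsSpectralDecomp (normLapM H) ΛH PH)
    (u v : V) (x y : W)
    (h : projInv ΛG PG u v = projInv ΛH PH x y) :
    spd G u v = spd H x y := by
  have key : ∀ k : ℕ, ((1 - normLapM G) ^ k) u v = ((1 - normLapM H) ^ k) x y := by
    intro k
    rw [spectral_pow_apply hPG k u v, spectral_pow_apply hPH k x y]
    have h1 := congrArg
      (fun m : Multiset (ℝ × ℝ) => (m.map fun p => (1 - p.1) ^ k * p.2).sum) h
    simpa [projInv, Multiset.map_map, Function.comp] using h1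
  rw [one_sub_normLap G hG, one_sub_normLap H hH] at key
  have hSet : {k : ℕ | (adjM G ^ k) u v ≠ 0} = {k : ℕ | (adjM H ^ k) x y ≠ 0} := by
    ext k
    simp only [Set.mem_setOf_eq]
    rw [ne_eq, ne_eq, ← (normAdj_pow_zero_iff G hG k u v).2, ← (normAdj_pow_zero_iff H hH k x y).2, key k]
  rw [spd, spd, edist_eq_sInf_pow G u v, edist_eq_sInf_pow H x y, hSet]

end EPWL
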